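/- Let τ = {nop, res} ∪ ω be a type of nets with ω ⊆ {inp, used, free} and let A be a TS. Two distinct states s, s' ∈ S are τ-separable if and only if s' ∉ cl({s}) or s ∉ cl({s'}). -/
import Mathlib


/-! Boolean interactions -/

abbrev Interaction := Bool → Option Bool

def iNop : Interaction := fun b => some b
def iInp : Interaction := fun b => if b then some false else none
def iOut : Interaction := fun b => if b then none else some true
def iSet : Interaction := fun _ => some true
def iRes : Interaction := fun _ => some false
def iSwap : Interaction := fun b => some (!b)
def iUsed : Interaction := fun b => if b then some true else none
def iFree : Interaction := fun b => if b then none else some false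

def allInteractions : Set Interaction :=
  {iNop, iInp, iOut, iSet, iRes, iSwap, iUsed, iFree}

/-! Transition systems and regions -/

structure TS (S E : Type) where
  delta : S → E → Option S
  init : S

def IsRegion {S E : Type} (A : TS S E) (τ : Set Interaction)
    (sup : S → Bool) (sig : E → Interaction) : Prop :=
  (∀ e, sig e ∈ τ) ∧
  ∀ s e s', A.delta s e = some s' → sig e (sup s) = some (sup s')

def Separable {S E : Type} (A : TS S E) (τ : Set Interaction) (s s' : S) : Prop :=
  ∃ sup sig, IsRegion A τ sup sig ∧ sup s ≠ sup s'

def Inhibitable {S E : Type} (A : TS S E) (τ : Set Interaction) (e : E) (s : S) : Prop :=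
  ∃ sup sig, IsRegion A τ sup sig ∧ sig e (sup s) = none

def SSP {S E : Type} (A : TS S E) (τ : Set Interaction) : Prop :=
  ∀ s s' : S, s ≠ s' → Separable A τ s s'

def ESSP {S E : Type} (A : TS S E) (τ : Set Interaction) : Prop :=
  ∀ (s : S) (e : E), A.delta s e = none → Inhibitable A τ e s

def Feasible {S E : Type} (A : TS S E) (τ : Set Interaction) : Prop :=
  SSP A τ ∧ ESSP A τ

def Reachable {S E : Type} (A : TS S E) : Prop :=
  ∀ s : S, Relation.ReflTransGen (fun x y => ∃ e, A.delta x e = some y) A.init s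

/-! The closure cl(Q): the least subset R of S containing Q such that for all
s ∈ R, s' ∈ S, e ∈ E: if s' --e--> s then s' ∈ R, and if s --e--> s' and there
exist z, z' ∈ R with z --e--> z' then s' ∈ R. -/

inductive InCl {S E : Type} (A : TS S E) (Q : Set S) : S → Prop
  | base {s : S} : s ∈ Q → InCl A Q s
  | back {s s' : S} {e : E} : InCl A Q s → A.delta s' e = some s → InCl A Q s'
  | fwd {s s' z z' : S} {e : E} : InCl A Q s → A.delta s e = some s' →
      InCl A Q z → InCl A Q z' → A.delta z e = some z' → InCl A Q s'

open Classical in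
/-- The indicator function of the closure cl(Q). -/
noncomputable def canonSup {S E : Type} (A : TS S E) (Q : Set S) : S → Bool :=
  fun s => if InCl A Q s then true else false

open Classical in
/-- The canonical signature associated with the closure cl(Q), defined by the
first applicable case: used / free / inp / res (inp ∉ τ) / res (partial) / nop. -/
noncomputable def canonSig {S E : Type} (A : TS S E) (τ : Set Interaction)
    (Q : Set S) : E → Interaction :=
  fun e =>
    if iUsed ∈ τ ∧ ∀ s s', A.delta s e = some s' →
        canonSup A Q s = true ∧ canonSup A Q s' = true then iUsed
    else if iFree ∈ τ ∧ ∀ s s', A.delta s e = some s' →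
        canonSup A Q s = false ∧ canonSup A Q s' = false then iFree
    else if iInp ∈ τ ∧ ∀ s s', A.delta s e = some s' →
        canonSup A Q s = true ∧ canonSup A Q s' = false then iInp
    else if iInp ∉ τ ∧ ∀ s s', A.delta s e = some s' →
        canonSup A Q s = true ∧ canonSup A Q s' = false then iRes
    else if (∃ s s', A.delta s e = some s' ∧
              canonSup A Q s = true ∧ canonSup A Q s' = false) ∧
            ¬ (∀ s s', A.delta s e = some s' →
              canonSup A Q s = true ∧ canonSup A Q s' = false) then iRes
    else iNop

/-! Auxiliary lemmas -/

lemma tau_mono {ω : Set Interaction} (hω : ω ⊆ {iInp, iUsed, iFree})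
    {g : Interaction} (hg : g ∈ ({iNop, iRes} ∪ ω : Set Interaction)) :
    ∀ b, g b = some true → b = true := by
  simp only [Set.mem_union, Set.mem_insert_iff, Set.mem_singleton_iff] at hg
  have hg' : g = iNop ∨ g = iRes ∨ g ∈ ω := by tauto
  rcases hg' with h | h | h
  · subst h; decide
  · subst h; decide
  · have h2 := hω h
    simp only [Set.mem_insert_iff, Set.mem_singleton_iff] at h2
    rcases h2 with h | h | h <;> (subst h; decide)

lemma sup_true_of_inCl {S E : Type} (A : TS S E) {ω : Set Interaction}
    (hω : ω ⊆ {iInp, iUsed, iFree}) {sup : S → Bool} {sig : E → Interaction}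
    (hreg : IsRegion A ({iNop, iRes} ∪ ω) sup sig)
    (Q : Set S) (hQ : ∀ q ∈ Q, sup q = true) :
    ∀ x, InCl A Q x → sup x = true := by
  intro x hx
  induction hx with
  | base h => exact hQ _ h
  | @back t t' e ht hd ih =>
      have h1 : sig e (sup t') = some (sup t) := hreg.2 _ _ _ hd
      rw [ih] at h1
      exact tau_mono hω (hreg.1 e) _ h1
  | @fwd t t' z z' e ht hd hz hz' hzd iht ihz ihz' =>
      have h1 : sig e (sup z) = some (sup z') := hreg.2 _ _ _ hzd
      have h2 : sig e (sup t) = some (sup t') := hreg.2 _ _ _ hd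
      rw [ihz, ihz'] at h1
      rw [iht, h1] at h2
      exact (Option.some_inj.mp h2).symm

lemma canonSup_eq_true_iff {S E : Type} (A : TS S E) (Q : Set S) (x : S) :
    canonSup A Q x = true ↔ InCl A Q x := by
  by_cases h : InCl A Q x <;> simp [canonSup, h]

lemma canon_region {S E : Type} (A : TS S E) (ω : Set Interaction) (Q : Set S) :
    IsRegion A ({iNop, iRes} ∪ ω) (canonSup A Q)
      (canonSig A ({iNop, iRes} ∪ ω) Q) := by
  have hnop : iNop ∈ ({iNop, iRes} ∪ ω : Set Interaction) := Or.inl (Or.inl rfl)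
  have hres : iRes ∈ ({iNop, iRes} ∪ ω : Set Interaction) := Or.inl (Or.inr rfl)
  have hback : ∀ x x' (e : E), A.delta x e = some x' → (canonSup A Q) x' = true → (canonSup A Q) x = true := by
    intro x x' e hd h
    rw [canonSup_eq_true_iff] at h ⊢
    exact InCl.back h hd
  have hfwd : ∀ x x' z z' (e : E), A.delta x e = some x' → A.delta z e = some z' →
      (canonSup A Q) x = true → (canonSup A Q) z = true → (canonSup A Q) z' = true → (canonSup A Q) x' = true := by
    intro x x' z z' e hd hzd hx hz hz'
    rw [canonSup_eq_true_iff] at hx hz hz' ⊢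
    exact InCl.fwd hx hd hz hz' hzd
  constructor
  · intro e
    unfold canonSig
    split_ifs with h1 h2 h3 h4 h5
    · exact h1.1
    · exact h2.1
    · exact h3.1
    · exact hres
    · exact hres
    · exact hnop
  · intro x e x' hd
    unfold canonSig
    split_ifs with h1 h2 h3 h4 h5
    · obtain ⟨hx, hx'⟩ := h1.2 x x' hd
      rw [hx, hx']; rfl
    · obtain ⟨hx, hx'⟩ := h2.2 x x' hd
      rw [hx, hx']; rfl
    · obtain ⟨hx, hx'⟩ := h3.2 x x' hd
      rw [hx, hx']; rfl
    · obtain ⟨hx, hx'⟩ := h4.2 x x' hd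
      rw [hx, hx']; rfl
    · -- iRes, mixed case
      obtain ⟨⟨z, z', hzd, hz, hz'⟩, _⟩ := h5
      have hx' : (canonSup A Q) x' = false := by
        by_contra hc
        have hx'' : (canonSup A Q) x' = true := by
          cases h : (canonSup A Q) x' with
          | false => exact absurd h hc
          | true => rfl
        have hx : (canonSup A Q) x = true := hback x x' e hd hx''
        have : (canonSup A Q) z' = true := hfwd z z' x x' e hzd hd hz hx hx''
        rw [hz'] at this; exact absurd this (by decide)
      rw [hx']; rfl
    · -- iNop
      have key : (canonSup A Q) x' = (canonSup A Q) x := by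
        cases h : (canonSup A Q) x with
        | false =>
            cases h' : (canonSup A Q) x' with
            | false => rfl
            | true =>
                have := hback x x' e hd h'
                rw [h] at this; exact absurd this (by decide)
        | true =>
            cases h' : (canonSup A Q) x' with
            | true => rfl
            | false =>
                exfalso
                have hex : ∃ z z', A.delta z e = some z' ∧ (canonSup A Q) z = true ∧ (canonSup A Q) z' = false :=
                  ⟨x, x', hd, h, h'⟩
                by_cases hall : ∀ z z', A.delta z e = some z' → (canonSup A Q) z = true ∧ (canonSup A Q) z' = false
                · by_cases hinp : iInp ∈ ({iNop, iRes} ∪ ω : Set Interaction)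
                  · exact h3 ⟨hinp, hall⟩
                  · exact h4 ⟨hinp, hall⟩
                · exact h5 ⟨hex, hall⟩
      rw [key]; rfl

/-- separability characterization via closures,
for τ = {nop, res} ∪ ω with ω ⊆ {inp, used, free}. -/
theorem separable_iff_closure {S E : Type} [Fintype S] [Fintype E]
    (A : TS S E) (hreach : Reachable A)
    (ω : Set Interaction) (hω : ω ⊆ {iInp, iUsed, iFree})
    (s s' : S) (hne : s ≠ s') :
    Separable A ({iNop, iRes} ∪ ω) s s' ↔
      (¬ InCl A {s} s' ∨ ¬ InCl A {s'} s) := by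
  constructor
  · rintro ⟨sup, sig, hreg, hsne⟩
    by_contra hc
    push_neg at hc
    obtain ⟨h1, h2⟩ := hc
    cases h : sup s with
    | true =>
        have : sup s' = true := by
          refine sup_true_of_inCl A hω hreg {s} ?_ s' h1
          intro q hq; rw [Set.mem_singleton_iff] at hq; subst hq; exact h
        rw [h, this] at hsne; exact hsne rfl
    | false =>
        have hs' : sup s' = true := by
          cases h' : sup s' with
          | true => rfl
          | false => rw [h, h'] at hsne; exact absurd rfl hsne
        have : sup s = true := by
          refine sup_true_of_inCl A hω hreg {s'} ?_ s h2
          intro q hq; rw [Set.mem_singleton_iff] at hq; subst hq; exact hs'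
        rw [h] at this; exact absurd this (by decide)
  · rintro (h | h)
    · refine ⟨canonSup A {s}, canonSig A ({iNop, iRes} ∪ ω) {s},
        canon_region A ω {s}, ?_⟩
      have h1 : canonSup A {s} s = true :=
        (canonSup_eq_true_iff A {s} s).mpr (InCl.base rfl)
      have h2 : canonSup A {s} s' = false := by
        cases h' : canonSup A {s} s' with
        | false => rfl
        | true => exact absurd ((canonSup_eq_true_iff A {s} s').mp h') h
      rw [h1, h2]; exact (by decide)
    · refine ⟨canonSup A {s'}, canonSig A ({iNop, iRes} ∪ ω) {s'},
        canon_region A ω {s'}, ?_⟩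
      have h1 : canonSup A {s'} s' = true :=
        (canonSup_eq_true_iff A {s'} s').mpr (InCl.base rfl)
      have h2 : canonSup A {s'} s = false := by
        cases h' : canonSup A {s'} s with
        | false => rfl
        | true => exact absurd ((canonSup_eq_true_iff A {s'} s).mp h') h
      rw [h1, h2]; exact (by decide)
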